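/- (Abstract lower semicontinuity of pullback attractors, the mechanism of the proof of Theorem 5.1, item (4).) Let X be a Banach space, {T₀(t)}_{t≥0} a semigroup of continuous maps of X (T₀(0) = id, T₀(t+s) = T₀(t) ∘ T₀(s)), and for each η ∈ (0,1] let S_η = {S_η(t,s) : t ≥ s} be an evolution process on X with a family of nonempty sets {A_η(r)}_{r∈ℝ} satisfying S_η(t,s)A_η(s) = A_η(t) for t ≥ s. Let A₀ ⊆ X be nonempty and compact, and fix t ∈ ℝ. Assume: (i) for all T, r > 0, sup_{τ∈[0,T]} sup_{s∈ℝ} sup_{‖z‖≤r} ‖S_η(s+τ, s)z − T₀(τ)z‖ → 0 as η → 0; and (ii) for every x₀ ∈ A₀ and every sequence η_k → 0 there exist s ≥ 0, z₀ ∈ X with T₀(s)z₀ = x₀, and points z_k ∈ A_{η_k}(t−s) with z_k → z₀. Then dist(A₀, A_η(t)) → 0 as η → 0, where dist(A,B) = sup_{a∈A} inf_{b∈B} ‖a−b‖. -/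

import Mathlib

open Filter Topology

/-- Abstract lower semicontinuity of pullback attractors (mechanism of the proof of
Theorem 5.1, item (4)): if the processes `S η` converge uniformly to the semigroup `T₀`
on bounded sets over compact time windows, and every `x₀ ∈ A₀` can be written as
`T₀ s z₀` with `z₀` approximated by points of `A (η_k) (t−s)` along every `η_k → 0`, then
`dist(A₀, A η t) → 0` as `η → 0`. -/
theorem abstract_lower_semicontinuity
    {X : Type*} [NormedAddCommGroup X] [NormedSpace ℝ X] [CompleteSpace X]
    -- the limiting semigroup of continuous maps
    (T₀ : ℝ → X → X)
    (hT₀0 : T₀ 0 = id)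
    (hT₀sg : ∀ t s : ℝ, 0 ≤ t → 0 ≤ s → T₀ (t + s) = T₀ t ∘ T₀ s)
    (hT₀cont : ∀ t : ℝ, 0 ≤ t → Continuous (T₀ t))
    -- the evolution processes `S η`, for `η ∈ (0,1]`, of continuous maps
    (S : ℝ → ℝ → ℝ → X → X)
    (hSid : ∀ η ∈ Set.Ioc (0:ℝ) 1, ∀ t : ℝ, S η t t = id)
    (hScomp : ∀ η ∈ Set.Ioc (0:ℝ) 1, ∀ t s r : ℝ, r ≤ s → s ≤ t →
      S η t s ∘ S η s r = S η t r)
    (hScont : ∀ η ∈ Set.Ioc (0:ℝ) 1, ∀ t s : ℝ, s ≤ t → Continuous (S η t s))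
    -- invariant families of nonempty sets for `S η`
    (A : ℝ → ℝ → Set X)
    (hAne : ∀ η ∈ Set.Ioc (0:ℝ) 1, ∀ r : ℝ, (A η r).Nonempty)
    (hAinv : ∀ η ∈ Set.Ioc (0:ℝ) 1, ∀ t s : ℝ, s ≤ t → S η t s '' A η s = A η t)
    -- the limiting compact set and the fixed time
    (A₀ : Set X) (hA₀c : IsCompact A₀) (hA₀ne : A₀.Nonempty)
    (t : ℝ)
    -- (i) uniform convergence of the processes to the semigroup on bounded sets
    (hconv : ∀ T > (0:ℝ), ∀ r > (0:ℝ), ∀ ε > (0:ℝ), ∃ η₀ > (0:ℝ), ∀ η : ℝ,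
      0 < η → η ≤ η₀ → η ≤ 1 →
      ∀ τ ∈ Set.Icc (0:ℝ) T, ∀ s : ℝ, ∀ z : X, ‖z‖ ≤ r →
        ‖S η (s + τ) s z - T₀ τ z‖ ≤ ε)
    -- (ii) structural approximation of the points of `A₀`
    (hstruct : ∀ x₀ ∈ A₀, ∀ ηk : ℕ → ℝ, (∀ k, ηk k ∈ Set.Ioc (0:ℝ) 1) →
      Tendsto ηk atTop (𝓝 0) →
      ∃ s : ℝ, 0 ≤ s ∧ ∃ z₀ : X, T₀ s z₀ = x₀ ∧
        ∃ zk : ℕ → X, (∀ k, zk k ∈ A (ηk k) (t - s)) ∧ Tendsto zk atTop (𝓝 z₀)) :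
    ∀ ε > (0:ℝ), ∃ η₀ > (0:ℝ), ∀ η : ℝ, 0 < η → η ≤ η₀ → η ≤ 1 →
      ∀ x ∈ A₀, Metric.infDist x (A η t) < ε := by

  by_contra hcon
  push_neg at hcon
  obtain ⟨ε, hε, hbad⟩ := hcon
  -- choose a sequence η_k → 0 with bad points x_k ∈ A₀
  have hchoice : ∀ k : ℕ, ∃ η : ℝ, (0 < η ∧ η ≤ 1) ∧ η ≤ 1/(k+1) ∧
      ∃ x ∈ A₀, ε ≤ Metric.infDist x (A η t) := by
    intro k
    have hk : (0:ℝ) < min 1 ((1:ℝ)/(k+1)) := by positivity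
    obtain ⟨η, h1, h2, h3, x, hx, hge⟩ := hbad (min 1 ((1:ℝ)/(k+1))) hk
    exact ⟨η, ⟨h1, h3⟩, le_trans h2 (min_le_right _ _), x, hx, hge⟩
  choose η hη hη' x hxA hxd using hchoice
  have hη01 : ∀ k, η k ∈ Set.Ioc (0:ℝ) 1 := fun k => ⟨(hη k).1, (hη k).2⟩
  have hηto : Tendsto η atTop (𝓝 0) := by
    have h1 : Tendsto (fun k : ℕ => 1/((k:ℝ)+1)) atTop (𝓝 0) :=
      tendsto_one_div_add_atTop_nhds_zero_nat
    exact squeeze_zero (fun k => (hη k).1.le) hη' h1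
  -- compactness: extract subsequence x ∘ φ → x₀ ∈ A₀
  obtain ⟨x₀, hx₀A, φ, hφ, hxto⟩ := hA₀c.tendsto_subseq hxA
  have hηφ01 : ∀ k, η (φ k) ∈ Set.Ioc (0:ℝ) 1 := fun k => hη01 (φ k)
  have hηφto : Tendsto (fun k => η (φ k)) atTop (𝓝 0) :=
    hηto.comp hφ.tendsto_atTop
  obtain ⟨s, hs, z₀, hz₀, zk, hzk, hzkto⟩ := hstruct x₀ hx₀A _ hηφ01 hηφto
  -- uniform convergence parameters
  obtain ⟨η₀, hη₀, hη₀P⟩ := hconv (s+1) (by linarith) (‖z₀‖+1) (by positivity)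
    (ε/3) (by positivity)
  -- eventually statements
  have E1 : ∀ᶠ k in atTop, η (φ k) ≤ η₀ := by
    have := hηφto.eventually (eventually_le_nhds hη₀)
    simpa using this
  have E2 : ∀ᶠ k in atTop, ‖zk k‖ ≤ ‖z₀‖ + 1 := by
    have : ∀ᶠ k in atTop, zk k ∈ Metric.closedBall z₀ 1 :=
      hzkto.eventually (Metric.closedBall_mem_nhds z₀ one_pos)
    filter_upwards [this] with k hk
    have : ‖zk k - z₀‖ ≤ 1 := by simpa [dist_eq_norm] using hk
    calc ‖zk k‖ = ‖zk k - z₀ + z₀‖ := by rw [sub_add_cancel]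
      _ ≤ ‖zk k - z₀‖ + ‖z₀‖ := norm_add_le _ _
      _ ≤ ‖z₀‖ + 1 := by linarith
  have E3 : ∀ᶠ k in atTop, ‖T₀ s (zk k) - T₀ s z₀‖ < ε/3 := by
    have hc : Tendsto (fun k => T₀ s (zk k)) atTop (𝓝 (T₀ s z₀)) :=
      ((hT₀cont s hs).continuousAt.tendsto).comp hzkto
    have := hc.eventually (Metric.ball_mem_nhds (T₀ s z₀) (by positivity : (0:ℝ) < ε/3))
    filter_upwards [this] with k hk
    simpa [dist_eq_norm] using hk
  have E4 : ∀ᶠ k in atTop, ‖x (φ k) - x₀‖ < ε/3 := by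
    have := hxto.eventually (Metric.ball_mem_nhds x₀ (by positivity : (0:ℝ) < ε/3))
    filter_upwards [this] with k hk
    simpa [dist_eq_norm] using hk
  obtain ⟨k, h1, h2, h3, h4⟩ := (E1.and (E2.and (E3.and E4))).exists
  -- the approximating point in A (η (φ k)) t
  set ηk := η (φ k)
  have hmem : S ηk t (t - s) (zk k) ∈ A ηk t := by
    rw [← hAinv ηk (hηφ01 k) t (t - s) (by linarith)]
    exact ⟨zk k, hzk k, rfl⟩
  have hconv1 : ‖S ηk ((t-s) + s) (t-s) (zk k) - T₀ s (zk k)‖ ≤ ε/3 :=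
    hη₀P ηk (hηφ01 k).1 h1 (hηφ01 k).2 s ⟨hs, by linarith⟩ (t-s) (zk k) h2
  have hts : (t - s) + s = t := by ring
  rw [hts] at hconv1
  have hd : Metric.infDist (x (φ k)) (A ηk t) ≤ ‖x (φ k) - S ηk t (t-s) (zk k)‖ := by
    have := Metric.infDist_le_dist_of_mem (x := x (φ k)) hmem
    simpa [dist_eq_norm] using this
  have hineq : ‖x (φ k) - S ηk t (t-s) (zk k)‖ < ε := by
    have key : x (φ k) - S ηk t (t-s) (zk k) =
        (x (φ k) - x₀) + (x₀ - T₀ s (zk k)) + (T₀ s (zk k) - S ηk t (t-s) (zk k)) := by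
      abel
    rw [key]
    have h3' : ‖x₀ - T₀ s (zk k)‖ < ε/3 := by
      rw [← hz₀, norm_sub_rev]; exact h3
    have h5 : ‖T₀ s (zk k) - S ηk t (t-s) (zk k)‖ ≤ ε/3 := by
      rw [norm_sub_rev]; exact hconv1
    calc ‖(x (φ k) - x₀) + (x₀ - T₀ s (zk k)) + (T₀ s (zk k) - S ηk t (t-s) (zk k))‖
        ≤ ‖(x (φ k) - x₀) + (x₀ - T₀ s (zk k))‖ + ‖T₀ s (zk k) - S ηk t (t-s) (zk k)‖ :=
          norm_add_le _ _
      _ ≤ ‖x (φ k) - x₀‖ + ‖x₀ - T₀ s (zk k)‖ + ‖T₀ s (zk k) - S ηk t (t-s) (zk k)‖ :=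
          add_le_add_left (norm_add_le _ _) _
      _ < ε/3 + ε/3 + ε/3 := by linarith
      _ = ε := by ring
  exact absurd (hxd (φ k)) (by push_neg; exact lt_of_le_of_lt hd hineq)
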